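/- Let G be a finite group and let B ∈ (ℤ[G])^{V×V}. If for some ℓ every entry of B^ℓ lies in u_G·ℤ, then the characteristic polynomial of ℰ(B) divides, up to a power of t, the product of the characteristic polynomial of 𝒜(B) with t^{|V|(|G|-1)}; concretely, χ_{ℰ(B)}(t) = χ_{𝒜(B)}(t) · t^{|V|(|G|-1)}. -/

import Mathlib

open MonoidAlgebra Matrix Polynomial
set_option linter.unusedSectionVars false

noncomputable def extMat {G V : Type*} [Group G]
    (B : Matrix V V (MonoidAlgebra ℤ G)) : Matrix (V × G) (V × G) ℤ :=
  fun p q => (B p.1 q.1).coeff (p.2⁻¹ * q.2)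

noncomputable def augMat {G V : Type*} [Group G] [Fintype G]
    (B : Matrix V V (MonoidAlgebra ℤ G)) : Matrix V V ℤ :=
  fun i j => ∑ g : G, (B i j).coeff g

noncomputable def uG (G : Type*) [Group G] [Fintype G] : MonoidAlgebra ℤ G :=
  ∑ g : G, single g 1

section Aux

variable {G V : Type*} [Group G] [Fintype G] [DecidableEq G] [Fintype V] [DecidableEq V]

omit [DecidableEq G] in
lemma CPE.mul_apply_fin (x y : MonoidAlgebra ℤ G) (z : G) :
    (x * y).coeff z = ∑ f : G, x.coeff f * y.coeff (f⁻¹ * z) := by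
  rw [MonoidAlgebra.coeff_mul_apply_left, Finsupp.sum_fintype]
  simp

lemma CPE.uG_apply (g : G) : (uG G).coeff g = 1 := by
  rw [uG, MonoidAlgebra.coeff_sum, Finset.sum_apply']
  simp [MonoidAlgebra.single_apply]

lemma CPE.uG_mul (x : MonoidAlgebra ℤ G) : uG G * x = (∑ g : G, x.coeff g) • uG G := by
  ext h
  rw [CPE.mul_apply_fin]
  have h2 : ((∑ g : G, x.coeff g) • uG G).coeff h = ∑ g : G, x.coeff g := by
    rw [MonoidAlgebra.coeff_smul_apply, CPE.uG_apply, smul_eq_mul, mul_one]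
  rw [h2]
  simp only [CPE.uG_apply, one_mul]
  simpa using Equiv.sum_comp ((Equiv.inv G).trans (Equiv.mulRight h)) (fun a => x.coeff a)

lemma CPE.extMat_mul (A B : Matrix V V (MonoidAlgebra ℤ G)) :
    extMat (A * B) = extMat A * extMat B := by
  ext ⟨i, g⟩ ⟨j, h⟩
  show ((A * B) i j).coeff (g⁻¹ * h) = _
  calc ((A * B) i j).coeff (g⁻¹ * h) = ∑ k, (A i k * B k j).coeff (g⁻¹ * h) := by
        rw [Matrix.mul_apply, MonoidAlgebra.coeff_sum, Finset.sum_apply']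
    _ = ∑ k, ∑ f : G, (A i k).coeff (g⁻¹ * f) * (B k j).coeff (f⁻¹ * h) := by
        refine Finset.sum_congr rfl fun k _ => ?_
        rw [CPE.mul_apply_fin]
        refine Fintype.sum_equiv (Equiv.mulLeft g) _ _ fun a => ?_
        have e1 : g⁻¹ * (g * a) = a := by group
        have e2 : (g * a)⁻¹ * h = a⁻¹ * (g⁻¹ * h) := by group
        rw [Equiv.coe_mulLeft, e1, e2]
    _ = _ := by rw [Matrix.mul_apply, Fintype.sum_prod_type]; rfl

lemma CPE.extMat_one : extMat (1 : Matrix V V (MonoidAlgebra ℤ G)) = 1 := by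
  ext ⟨i, g⟩ ⟨j, h⟩
  classical
  rcases eq_or_ne i j with rfl | hij
  · rcases eq_or_ne g h with rfl | hgh
    · simp [extMat, Matrix.one_apply, MonoidAlgebra.one_def, MonoidAlgebra.single_apply]
    · simp [extMat, Matrix.one_apply, MonoidAlgebra.one_def, MonoidAlgebra.single_apply,
        hgh, Prod.ext_iff, eq_comm, inv_mul_eq_one]
  · simp [extMat, Matrix.one_apply, hij, Prod.ext_iff]

lemma CPE.extMat_pow (B : Matrix V V (MonoidAlgebra ℤ G)) (n : ℕ) :
    extMat (B ^ n) = (extMat B) ^ n := by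
  induction n with
  | zero => simpa using CPE.extMat_one
  | succ n ih => rw [pow_succ, pow_succ, CPE.extMat_mul, ih]

end Aux
section Aux2

variable {G V : Type*} [Group G] [Fintype G] [DecidableEq G] [Fintype V] [DecidableEq V]

noncomputable def CPE.Smat (G V : Type*) [Group G] [DecidableEq G] [DecidableEq V] :
    Matrix (V × G) (V × G) ℤ :=
  fun p q => if q.2 = 1 then (if p.1 = q.1 then 1 else 0) else (if p = q then 1 else 0)

noncomputable def CPE.Tmat (G V : Type*) [Group G] [DecidableEq G] [DecidableEq V] :
    Matrix (V × G) (V × G) ℤ :=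
  fun p q => if p.1 = q.1 then
    (if q.2 = 1 then (if p.2 = 1 then 1 else -1) else (if p.2 = q.2 then 1 else 0)) else 0

lemma CPE.T_mul_apply (N : Matrix (V × G) (V × G) ℤ) (i : V) (g : G) (q : V × G) :
    (CPE.Tmat G V * N) (i, g) q =
      if g = 1 then N (i, 1) q else N (i, g) q - N (i, 1) q := by
  rw [Matrix.mul_apply, Fintype.sum_prod_type]
  simp only [CPE.Tmat]
  have hk : ∀ k : V, (∑ f : G, (if i = k then
      (if f = 1 then (if g = 1 then (1:ℤ) else -1) else (if g = f then 1 else 0)) else 0)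
        * N (k, f) q)
      = if i = k then (∑ f : G, (if f = 1 then (if g = 1 then (1:ℤ) else -1)
          else (if g = f then 1 else 0)) * N (k, f) q) else 0 := by
    intro k
    by_cases hik : i = k <;> simp [hik]
  rw [Finset.sum_congr rfl fun k _ => hk k, Finset.sum_ite_eq]
  simp only [Finset.mem_univ, if_true]
  by_cases hg : g = 1
  · subst hg
    rw [if_pos rfl]
    have hcoef : ∀ f : G, (if f = 1 then (1:ℤ)
        else if (1:G) = f then 1 else 0) = if f = 1 then 1 else 0 := by
      intro f; by_cases hf : f = 1
      · rw [if_pos hf, if_pos hf]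
      · rw [if_neg hf, if_neg hf, if_neg (fun h => hf h.symm)]
    rw [Finset.sum_congr rfl fun f _ => by rw [hcoef f]]
    simp [ite_mul, Finset.sum_ite_eq']
  · simp only [if_neg hg]
    have hcoef : ∀ f : G, (if f = 1 then (-1:ℤ) else if g = f then 1 else 0)
        = (if f = g then 1 else 0) + (if f = 1 then -1 else 0) := by
      intro f; by_cases hf : f = 1
      · subst hf; rw [if_pos rfl, if_pos rfl, if_neg (fun h : (1:G) = g => hg h.symm)]; ring
      · rw [if_neg hf, if_neg hf, add_zero]
        by_cases hfg : f = g
        · rw [if_pos hfg, if_pos hfg.symm]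
        · rw [if_neg hfg, if_neg (fun h => hfg h.symm)]
    rw [Finset.sum_congr rfl fun f _ => by rw [hcoef f]]
    simp only [add_mul, Finset.sum_add_distrib, ite_mul, one_mul, zero_mul, neg_mul, neg_zero]
    rw [Finset.sum_ite_eq', Finset.sum_ite_eq']
    simp only [Finset.mem_univ, if_true]
    ring

lemma CPE.mul_S_apply (N : Matrix (V × G) (V × G) ℤ) (p : V × G) (j : V) (h : G) :
    (N * CPE.Smat G V) p (j, h) =
      if h = 1 then ∑ f : G, N p (j, f) else N p (j, h) := by
  rw [Matrix.mul_apply, Fintype.sum_prod_type]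
  by_cases hh : h = 1
  · subst hh
    rw [if_pos rfl]
    have hterm : ∀ (k : V) (f : G), N p (k, f) * CPE.Smat G V (k, f) (j, 1)
        = if k = j then N p (k, f) else 0 := by
      intro k f
      simp only [CPE.Smat]
      by_cases hkj : k = j <;> simp [hkj]
    rw [Finset.sum_congr rfl fun k _ => Finset.sum_congr rfl fun f _ => hterm k f,
      Finset.sum_comm]
    simp [Finset.sum_ite_eq']
  · rw [if_neg hh]
    have hterm : ∀ (k : V) (f : G), N p (k, f) * CPE.Smat G V (k, f) (j, h)
        = if (k, f) = (j, h) then N p (k, f) else 0 := by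
      intro k f
      simp only [CPE.Smat, if_neg hh]
      by_cases hkf : (k, f) = (j, h) <;> simp [hkf]
    rw [Finset.sum_congr rfl fun k _ => Finset.sum_congr rfl fun f _ => hterm k f]
    simp [Prod.ext_iff, ite_and, Finset.sum_ite_eq', Finset.sum_ite_irrel]

lemma CPE.T_mul_S : CPE.Tmat G V * CPE.Smat G V = 1 := by
  ext ⟨i, g⟩ ⟨j, h⟩
  rw [CPE.T_mul_apply]
  by_cases hg : g = 1 <;> by_cases hh : h = 1 <;> by_cases hij : i = j <;>
    simp [CPE.Smat, hg, hh, hij, Matrix.one_apply, Prod.ext_iff, Ne.symm]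

lemma CPE.S_mul_T : CPE.Smat G V * CPE.Tmat G V = 1 :=
  mul_eq_one_comm.mp CPE.T_mul_S

end Aux2
section Aux3

variable {G V : Type*} [Group G] [Fintype G] [DecidableEq G] [Fintype V] [DecidableEq V]

lemma CPE.charpoly_conj (M : Matrix (V × G) (V × G) ℤ) :
    (CPE.Tmat G V * M * CPE.Smat G V).charpoly = M.charpoly := by
  have hTS : (CPE.Tmat G V).map Polynomial.C * (CPE.Smat G V).map Polynomial.C
      = (1 : Matrix (V × G) (V × G) (Polynomial ℤ)) := by
    rw [← Matrix.map_mul, CPE.T_mul_S, Matrix.map_one _ Polynomial.C_0 Polynomial.C_1]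
  have hchar : charmatrix (CPE.Tmat G V * M * CPE.Smat G V)
      = (CPE.Tmat G V).map Polynomial.C * charmatrix M * (CPE.Smat G V).map Polynomial.C := by
    unfold charmatrix
    rw [Matrix.mul_sub, Matrix.sub_mul]
    congr 1
    · rw [← (Matrix.scalar_commute (X : Polynomial ℤ)
        (fun r => Polynomial.commute_X r) ((CPE.Tmat G V).map Polynomial.C)).eq,
        Matrix.mul_assoc, hTS, Matrix.mul_one]
    · simp only [RingHom.mapMatrix_apply]
      rw [← Matrix.map_mul, ← Matrix.map_mul]
  rw [Matrix.charpoly, Matrix.charpoly, hchar, Matrix.det_mul, Matrix.det_mul]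
  have hdet : ((CPE.Tmat G V).map Polynomial.C).det * ((CPE.Smat G V).map Polynomial.C).det
      = 1 := by rw [← Matrix.det_mul, hTS, Matrix.det_one]
  calc ((CPE.Tmat G V).map Polynomial.C).det * (charmatrix M).det
        * ((CPE.Smat G V).map Polynomial.C).det
      = (((CPE.Tmat G V).map Polynomial.C).det * ((CPE.Smat G V).map Polynomial.C).det)
        * (charmatrix M).det := by ring
    _ = (charmatrix M).det := by rw [hdet, one_mul]

end Aux3
section Aux4

variable {G V : Type*} [Group G] [Fintype G] [DecidableEq G] [Fintype V] [DecidableEq V]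

lemma CPE.MS_apply (B : Matrix V V (MonoidAlgebra ℤ G)) (i : V) (g : G) (j : V) (h : G) :
    (extMat B * CPE.Smat G V) (i, g) (j, h) =
      if h = 1 then augMat B i j else (B i j).coeff (g⁻¹ * h) := by
  rw [CPE.mul_S_apply]
  by_cases hh : h = 1
  · rw [if_pos hh, if_pos hh]
    show (∑ f : G, (B i j).coeff (g⁻¹ * f)) = ∑ g' : G, (B i j).coeff g'
    exact Equiv.sum_comp (Equiv.mulLeft g⁻¹) (fun a => (B i j).coeff a)
  · rw [if_neg hh, if_neg hh]; rfl

lemma CPE.P_apply (B : Matrix V V (MonoidAlgebra ℤ G)) (i : V) (g : G) (j : V) (h : G) :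
    (CPE.Tmat G V * (extMat B * CPE.Smat G V)) (i, g) (j, h) =
      if h = 1 then (if g = 1 then augMat B i j else 0)
      else (if g = 1 then (B i j).coeff h else (B i j).coeff (g⁻¹ * h) - (B i j).coeff h) := by
  rw [CPE.T_mul_apply]
  by_cases hg : g = 1 <;> by_cases hh : h = 1 <;>
    simp [CPE.MS_apply, hg, hh]

/-- The index equivalence splitting off the identity coordinate. -/
def CPE.e (G V : Type*) [Group G] [DecidableEq G] :
    (V ⊕ (V × {h : G // h ≠ 1})) ≃ V × G where
  toFun x := match x with
    | .inl j => (j, 1)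
    | .inr p => (p.1, p.2.1)
  invFun p := if hp : p.2 = 1 then .inl p.1 else .inr (p.1, ⟨p.2, hp⟩)
  left_inv := by
    rintro (j | ⟨j, h⟩)
    · simp
    · simp [h.2]
  right_inv := by
    rintro ⟨j, h⟩
    by_cases hh : h = 1 <;> simp [hh]

end Aux4
section Aux5

lemma CPE.fromBlocks_pow {m n R : Type*} [CommRing R] [Fintype m] [Fintype n]
    [DecidableEq m] [DecidableEq n]
    (A : Matrix m m R) (Xb : Matrix m n R) (Cb : Matrix n n R) (k : ℕ) :
    ∃ Y, (Matrix.fromBlocks A Xb 0 Cb) ^ k = Matrix.fromBlocks (A ^ k) Y 0 (Cb ^ k) := by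
  induction k with
  | zero => exact ⟨0, by rw [pow_zero, pow_zero, pow_zero, ← Matrix.fromBlocks_one]⟩
  | succ k ih =>
    obtain ⟨Y, hY⟩ := ih
    refine ⟨A ^ k * Xb + Y * Cb, ?_⟩
    rw [pow_succ, hY, Matrix.fromBlocks_multiply]
    simp [pow_succ]

lemma CPE.submatrix_pow {m n R : Type*} [CommRing R] [Fintype m] [Fintype n]
    [DecidableEq m] [DecidableEq n] (P : Matrix n n R) (e : m ≃ n) (k : ℕ) :
    (P.submatrix e e) ^ k = (P ^ k).submatrix e e := by
  have h1 : ∀ Q : Matrix n n R, Q.submatrix e e = Matrix.reindexAlgEquiv R R e.symm Q := by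
    intro Q
    rw [Matrix.reindexAlgEquiv_apply, Matrix.reindex_apply, Equiv.symm_symm]
  rw [h1, h1, ← map_pow]

end Aux5

theorem charpoly_ext_eq {G V : Type*} [Group G] [Fintype G] [DecidableEq G]
    [Fintype V] [DecidableEq V]
    (B : Matrix V V (MonoidAlgebra ℤ G))
    (h : ∃ ℓ : ℕ, ∀ i j, ∃ c : ℤ, (B ^ ℓ) i j = c • uG G) :
    (extMat B).charpoly =
      (augMat B).charpoly * X ^ (Fintype.card V * (Fintype.card G - 1)) := by
  classical
  obtain ⟨ℓ, hℓ⟩ := h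
  choose c0 hc0 using hℓ
  have hstep : ∀ i j : V, ∃ c : ℤ, (B ^ (ℓ + 1)) i j = c • uG G := by
    intro i j
    refine ⟨∑ k, c0 i k * (∑ g : G, (B k j).coeff g), ?_⟩
    have hmul : (B ^ (ℓ + 1)) i j = ∑ k, (B ^ ℓ) i k * B k j := by
      rw [pow_succ, Matrix.mul_apply]
    rw [hmul,
      Finset.sum_congr rfl (fun k _ => by
        rw [hc0 i k, smul_mul_assoc, CPE.uG_mul, smul_smul]),
      ← Finset.sum_smul]
  choose c hc using hstep
  have h2 : (CPE.Tmat G V * (extMat B * CPE.Smat G V)).submatrix (CPE.e G V) (CPE.e G V) =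
      Matrix.fromBlocks (augMat B)
        (Matrix.of ((fun j q => (CPE.Tmat G V * (extMat B * CPE.Smat G V)) (j, 1) (q.1, q.2.1)) : Matrix V (V × {h : G // h ≠ 1}) ℤ))
        0
        (Matrix.of ((fun p q => (CPE.Tmat G V * (extMat B * CPE.Smat G V)) (p.1, p.2.1) (q.1, q.2.1)) : Matrix (V × {h : G // h ≠ 1}) (V × {h : G // h ≠ 1}) ℤ)) := by
    ext x y
    cases x with
    | inl i =>
      cases y with
      | inl j =>
        show (CPE.Tmat G V * (extMat B * CPE.Smat G V)) (i, 1) (j, 1) = augMat B i j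
        rw [CPE.P_apply]; simp
      | inr q => rfl
    | inr p =>
      cases y with
      | inl j =>
        show (CPE.Tmat G V * (extMat B * CPE.Smat G V)) (p.1, p.2.1) (j, 1) = 0
        rw [CPE.P_apply]; simp [p.2.2]
      | inr q => rfl
  have h3 : (extMat B).charpoly = (augMat B).charpoly *
      Matrix.charpoly (Matrix.of ((fun p q => (CPE.Tmat G V * (extMat B * CPE.Smat G V)) (p.1, p.2.1) (q.1, q.2.1)) : Matrix (V × {h : G // h ≠ 1}) (V × {h : G // h ≠ 1}) ℤ)) := by
    have hconj : (CPE.Tmat G V * (extMat B * CPE.Smat G V)).charpoly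
        = (extMat B).charpoly := by
      rw [← Matrix.mul_assoc]
      exact CPE.charpoly_conj (extMat B)
    rw [← hconj, ← Matrix.charpoly_reindex (CPE.e G V).symm
      (CPE.Tmat G V * (extMat B * CPE.Smat G V))]
    rw [Matrix.reindex_apply]
    simp only [Equiv.symm_symm]
    rw [h2, Matrix.charpoly_fromBlocks_zero₂₁]
  have hPn : ∀ n : ℕ, (CPE.Tmat G V * (extMat B * CPE.Smat G V)) ^ n
      = CPE.Tmat G V * (extMat B ^ n * CPE.Smat G V) := by
    intro n
    induction n with
    | zero => rw [pow_zero, pow_zero, Matrix.one_mul, CPE.T_mul_S]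
    | succ n ih =>
      rw [pow_succ, ih, pow_succ]
      calc CPE.Tmat G V * (extMat B ^ n * CPE.Smat G V)
            * (CPE.Tmat G V * (extMat B * CPE.Smat G V))
          = CPE.Tmat G V * (extMat B ^ n * ((CPE.Smat G V * CPE.Tmat G V)
            * (extMat B * CPE.Smat G V))) := by
            simp only [Matrix.mul_assoc]
        _ = CPE.Tmat G V * (extMat B ^ n * (extMat B * CPE.Smat G V)) := by
            rw [CPE.S_mul_T, Matrix.one_mul]
        _ = CPE.Tmat G V * (extMat B ^ n * extMat B * CPE.Smat G V) := by
            simp only [Matrix.mul_assoc]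
  have hrow : ∀ (i : V) (g : G), g ≠ 1 → ∀ q : V × G,
      ((CPE.Tmat G V * (extMat B * CPE.Smat G V)) ^ (ℓ + 1)) (i, g) q = 0 := by
    intro i g hg q
    obtain ⟨j, h'⟩ := q
    rw [hPn, ← CPE.extMat_pow, CPE.T_mul_apply, if_neg hg, CPE.MS_apply, CPE.MS_apply]
    have hval : ∀ z z' : G, ((B ^ (ℓ + 1)) i j).coeff z = ((B ^ (ℓ + 1)) i j).coeff z' := by
      intro z z'
      rw [hc i j, MonoidAlgebra.coeff_smul_apply, MonoidAlgebra.coeff_smul_apply, CPE.uG_apply, CPE.uG_apply]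
    by_cases hh : h' = 1
    · simp [hh]
    · rw [if_neg hh, if_neg hh, hval (g⁻¹ * h') (1⁻¹ * h'), sub_self]
  have hC0L : (Matrix.of ((fun p q => (CPE.Tmat G V * (extMat B * CPE.Smat G V)) (p.1, p.2.1) (q.1, q.2.1)) : Matrix (V × {h : G // h ≠ 1}) (V × {h : G // h ≠ 1}) ℤ)) ^ (ℓ + 1) = 0 := by
    obtain ⟨Y, hY⟩ := CPE.fromBlocks_pow (augMat B)
      (Matrix.of ((fun j q => (CPE.Tmat G V * (extMat B * CPE.Smat G V)) (j, 1) (q.1, q.2.1)) : Matrix V (V × {h : G // h ≠ 1}) ℤ))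
      (Matrix.of ((fun p q => (CPE.Tmat G V * (extMat B * CPE.Smat G V)) (p.1, p.2.1) (q.1, q.2.1)) : Matrix (V × {h : G // h ≠ 1}) (V × {h : G // h ≠ 1}) ℤ)) (ℓ + 1)
    have h5 : Matrix.fromBlocks ((augMat B) ^ (ℓ + 1)) Y 0
        ((Matrix.of ((fun p q => (CPE.Tmat G V * (extMat B * CPE.Smat G V)) (p.1, p.2.1) (q.1, q.2.1)) : Matrix (V × {h : G // h ≠ 1}) (V × {h : G // h ≠ 1}) ℤ)) ^ (ℓ + 1))
        = ((CPE.Tmat G V * (extMat B * CPE.Smat G V)) ^ (ℓ + 1)).submatrix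
            (CPE.e G V) (CPE.e G V) := by
      rw [← hY, ← h2, CPE.submatrix_pow]
    ext x y
    have h6 := congrFun (congrFun h5 (Sum.inr x)) (Sum.inr y)
    rw [Matrix.fromBlocks_apply₂₂] at h6
    rw [Matrix.zero_apply, h6]
    exact hrow x.1 x.2.1 x.2.2 _
  have hnil := Matrix.isNilpotent_charpoly_sub_pow_of_isNilpotent
    (M := Matrix.of ((fun p q => (CPE.Tmat G V * (extMat B * CPE.Smat G V)) (p.1, p.2.1) (q.1, q.2.1)) : Matrix (V × {h : G // h ≠ 1}) (V × {h : G // h ≠ 1}) ℤ)) ⟨ℓ + 1, hC0L⟩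
  have h0 := hnil.eq_zero
  rw [sub_eq_zero] at h0
  have hcard : Fintype.card (V × {h : G // h ≠ 1})
      = Fintype.card V * (Fintype.card G - 1) := by
    rw [Fintype.card_prod]
    congr 1
    rw [Fintype.card_subtype_compl (fun h : G => h = 1), Fintype.card_subtype_eq]
  rw [h3, h0, hcard]
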